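/- Every element of Q is a k-linear combination of images of elements u·z, where z ∈ X ∪ Y and u is a (possibly empty) product of the generators d, l(n,x), r(n,x) with x ∈ X only; that is, Q is spanned by the image of A(X) ⊗ (kX ⊕ kY). (This is the reduction underlying the description of the defining relations of the split null extension C ⊕ M of an associative conformal algebra C by a conformal C-module M.) -/

import Mathlib

set_option maxSynthPendingDepth 3

/-- Generators of the algebra `A(X ∪ Y)` (the disjoint union realized as `X ⊕ Y`). -/
inductive AGen (X : Type*) where
  | d : AGen X
  | l (n : ℕ) (a : X) : AGen X
  | r (n : ℕ) (a : X) : AGen X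

/-- Defining relations of `A(X ∪ Y)`. -/
inductive ARel (k : Type*) [CommRing k] (X : Type*) :
    FreeAlgebra k (AGen X) → FreeAlgebra k (AGen X) → Prop
  | ld (n : ℕ) (a : X) :
      ARel k X (FreeAlgebra.ι k (AGen.l n a) * FreeAlgebra.ι k AGen.d)
        (FreeAlgebra.ι k AGen.d * FreeAlgebra.ι k (AGen.l n a) +
          n • FreeAlgebra.ι k (AGen.l (n - 1) a))
  | rd (n : ℕ) (a : X) :
      ARel k X (FreeAlgebra.ι k (AGen.r n a) * FreeAlgebra.ι k AGen.d)
        (FreeAlgebra.ι k AGen.d * FreeAlgebra.ι k (AGen.r n a) +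
          n • FreeAlgebra.ι k (AGen.r (n - 1) a))
  | rl (n m : ℕ) (a b : X) :
      ARel k X (FreeAlgebra.ι k (AGen.r n a) * FreeAlgebra.ι k (AGen.l m b))
        (FreeAlgebra.ι k (AGen.l m b) * FreeAlgebra.ι k (AGen.r n a))

/-- The algebra `A(X)` presented by the generators `AGen X` and relations `ARel k X`. -/
abbrev AAlg (k : Type*) [CommRing k] (X : Type*) := RingQuot (ARel k X)

/-- The image of a generator in `A(X)`. -/
noncomputable def AAlg.gen (k : Type*) [CommRing k] {X : Type*} (g : AGen X) : AAlg k X :=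
  RingQuot.mkAlgHom k (ARel k X) (FreeAlgebra.ι k g)

/-- The defining relations of the module `Q` over `A(X ∪ Y)`: for all `a b ∈ X ∪ Y`,
`l(n,a)·b` for `n ≥ N(a,b)`, and
`r(m,b)·a − Σ_{s=0}^{N(a,b)−m} (−1)^{m+s}·(1/s!)·d^s·l(m+s,a)·b` for `m ∈ ℕ`
(the sum being empty when `N(a,b) < m`). -/
noncomputable def modRels (k : Type*) [Field k] (X Y : Type*)
    (N : (X ⊕ Y) → (X ⊕ Y) → ℕ) : Set ((X ⊕ Y) →₀ AAlg k (X ⊕ Y)) :=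
  {q | (∃ (n : ℕ) (a b : X ⊕ Y), N a b ≤ n ∧
          q = AAlg.gen k (AGen.l n a) • Finsupp.single b (1 : AAlg k (X ⊕ Y))) ∨
       (∃ (m : ℕ) (a b : X ⊕ Y),
          q = AAlg.gen k (AGen.r m b) • Finsupp.single a (1 : AAlg k (X ⊕ Y)) -
            ∑ s ∈ Finset.range (N a b + 1 - m),
              (((-1 : k) ^ (m + s) * (s.factorial : k)⁻¹) •
                  (AAlg.gen k AGen.d ^ s * AAlg.gen k (AGen.l (m + s) a))) •
                Finsupp.single b (1 : AAlg k (X ⊕ Y)))}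

namespace NER
variable (k : Type*) [Field k]

lemma gen_ld {W : Type*} (n : ℕ) (a : W) :
    AAlg.gen k (AGen.l n a) * AAlg.gen k AGen.d =
      AAlg.gen k AGen.d * AAlg.gen k (AGen.l n a) + n • AAlg.gen k (AGen.l (n - 1) a) := by
  have h := RingQuot.mkAlgHom_rel k (ARel.ld (k := k) n a)
  simpa [AAlg.gen, map_add, map_mul, map_nsmul] using h

variable (X Y : Type*) (N : (X ⊕ Y) → (X ⊕ Y) → ℕ)

noncomputable abbrev QM :=
  ((X ⊕ Y) →₀ AAlg k (X ⊕ Y)) ⧸ Submodule.span (AAlg k (X ⊕ Y)) (modRels k X Y N)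

noncomputable def mk1 (z : X ⊕ Y) : QM k X Y N :=
  Submodule.Quotient.mk (Finsupp.single z 1)

lemma scomm (c : k) (x : AAlg k (X ⊕ Y)) (q : QM k X Y N) : x • c • q = c • x • q := by
  rw [← algebraMap_smul (AAlg k (X ⊕ Y)) c q, ← mul_smul, ← Algebra.commutes, mul_smul,
    algebraMap_smul]

lemma sassoc (c : k) (x : AAlg k (X ⊕ Y)) (q : QM k X Y N) : (c • x) • q = c • x • q :=
  smul_assoc c x q

lemma M1 (n : ℕ) (a b : X ⊕ Y) (h : N a b ≤ n) :
    AAlg.gen k (AGen.l n a) • mk1 k X Y N b = 0 := by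
  rw [mk1, ← Submodule.Quotient.mk_smul]
  exact (Submodule.Quotient.mk_eq_zero _).2
    (Submodule.subset_span (Or.inl ⟨n, a, b, h, rfl⟩))

section AlgRels
variable {W : Type*}

lemma gen_rd (n : ℕ) (a : W) :
    AAlg.gen k (AGen.r n a) * AAlg.gen k AGen.d =
      AAlg.gen k AGen.d * AAlg.gen k (AGen.r n a) + n • AAlg.gen k (AGen.r (n - 1) a) := by
  have h := RingQuot.mkAlgHom_rel k (ARel.rd (k := k) n a)
  simpa [AAlg.gen, map_add, map_mul, map_nsmul] using h

lemma gen_rl (n m : ℕ) (a b : W) :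
    AAlg.gen k (AGen.r n a) * AAlg.gen k (AGen.l m b) =
      AAlg.gen k (AGen.l m b) * AAlg.gen k (AGen.r n a) := by
  have h := RingQuot.mkAlgHom_rel k (ARel.rl (k := k) n m a b)
  simpa [AAlg.gen, map_mul] using h

end AlgRels

lemma M2 (m : ℕ) (a b : X ⊕ Y) :
    AAlg.gen k (AGen.r m b) • mk1 k X Y N a =
      ∑ s ∈ Finset.range (N a b + 1 - m),
        ((-1 : k) ^ (m + s) * (s.factorial : k)⁻¹) •
          ((AAlg.gen k AGen.d ^ s * AAlg.gen k (AGen.l (m + s) a)) • mk1 k X Y N b) := by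
  have hmem : (AAlg.gen k (AGen.r m b) • Finsupp.single a (1 : AAlg k (X ⊕ Y)) -
      ∑ s ∈ Finset.range (N a b + 1 - m),
        (((-1 : k) ^ (m + s) * (s.factorial : k)⁻¹) •
            (AAlg.gen k AGen.d ^ s * AAlg.gen k (AGen.l (m + s) a))) •
          Finsupp.single b (1 : AAlg k (X ⊕ Y))) ∈
      Submodule.span (AAlg k (X ⊕ Y)) (modRels k X Y N) :=
    Submodule.subset_span (Or.inr ⟨m, a, b, rfl⟩)
  have h0 := (Submodule.Quotient.eq (Submodule.span (AAlg k (X ⊕ Y)) (modRels k X Y N))).2 hmem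
  rw [← (Submodule.span (AAlg k (X ⊕ Y)) (modRels k X Y N)).mkQ_apply,
    ← (Submodule.span (AAlg k (X ⊕ Y)) (modRels k X Y N)).mkQ_apply, map_sum] at h0
  simp only [Submodule.mkQ_apply, Submodule.Quotient.mk_smul, smul_assoc] at h0
  simpa [mk1] using h0

/-- The `d^s r(m',b) • a` span. -/
noncomputable def RSet (a b : X ⊕ Y) : Set (QM k X Y N) :=
  {q | ∃ (s m' : ℕ), q = ((AAlg.gen k AGen.d : AAlg k (X ⊕ Y)) ^ s *
    AAlg.gen k (AGen.r m' b)) • mk1 k X Y N a}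

lemma dR (a b : X ⊕ Y) (q : QM k X Y N) (hq : q ∈ Submodule.span k (RSet k X Y N a b)) :
    (AAlg.gen k AGen.d : AAlg k (X ⊕ Y)) • q ∈ Submodule.span k (RSet k X Y N a b) := by
  induction hq using Submodule.span_induction with
  | mem x hx =>
    obtain ⟨s, m', rfl⟩ := hx
    refine Submodule.subset_span ⟨s + 1, m', ?_⟩
    rw [← mul_smul, ← mul_assoc, ← pow_succ']
  | zero => simp
  | add x y hx hy ihx ihy => rw [smul_add]; exact add_mem ihx ihy
  | smul c x hx ihx => rw [scomm]; exact Submodule.smul_mem _ _ ihx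

lemma dpowR (a b : X ⊕ Y) (s : ℕ) (q : QM k X Y N)
    (hq : q ∈ Submodule.span k (RSet k X Y N a b)) :
    ((AAlg.gen k AGen.d : AAlg k (X ⊕ Y)) ^ s) • q ∈ Submodule.span k (RSet k X Y N a b) := by
  induction s with
  | zero => simpa using hq
  | succ s ih => rw [pow_succ', mul_smul]; exact dR k X Y N a b _ ih

lemma lemA (m : ℕ) (a b : X ⊕ Y) :
    AAlg.gen k (AGen.l m a) • mk1 k X Y N b ∈ Submodule.span k (RSet k X Y N a b) := by
  have main : ∀ t m : ℕ, N a b - m ≤ t →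
      AAlg.gen k (AGen.l m a) • mk1 k X Y N b ∈ Submodule.span k (RSet k X Y N a b) := by
    intro t
    induction t with
    | zero =>
      intro m hm
      rw [M1 k X Y N m a b (by omega)]
      exact zero_mem _
    | succ t ih =>
      intro m hm
      by_cases hcase : N a b ≤ m
      · rw [M1 k X Y N m a b hcase]; exact zero_mem _
      have hrange : N a b + 1 - m = (N a b - m) + 1 := by omega
      have hM2 := M2 k X Y N m a b
      rw [hrange, Finset.sum_range_succ'] at hM2
      have heq : ((-1 : k) ^ m) • (AAlg.gen k (AGen.l m a) • mk1 k X Y N b) =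
          AAlg.gen k (AGen.r m b) • mk1 k X Y N a -
            ∑ i ∈ Finset.range (N a b - m),
              ((-1 : k) ^ (m + (i + 1)) * ((i + 1).factorial : k)⁻¹) •
                (((AAlg.gen k AGen.d : AAlg k (X ⊕ Y)) ^ (i + 1) *
                  AAlg.gen k (AGen.l (m + (i + 1)) a)) • mk1 k X Y N b) := by
        rw [hM2, add_sub_cancel_left]
        simp
      have hmm : ((-1 : k) ^ m) • (AAlg.gen k (AGen.l m a) • mk1 k X Y N b) ∈
          Submodule.span k (RSet k X Y N a b) := by
        rw [heq]
        refine sub_mem (Submodule.subset_span ⟨0, m, by rw [pow_zero, one_mul]⟩)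
          (sum_mem fun i hi => Submodule.smul_mem _ _ ?_)
        rw [mul_smul]
        exact dpowR k X Y N a b _ _ (ih (m + (i + 1)) (by omega))
      exact (Submodule.smul_mem_iff _ (pow_ne_zero _ (neg_ne_zero.2 one_ne_zero))).1 hmm
  exact main (N a b - m) m le_rfl

/-- The monoid generated by `d` and all the `r(m,b)`. -/
noncomputable def Mdr : Submonoid (AAlg k (X ⊕ Y)) :=
  Submonoid.closure ({AAlg.gen k AGen.d} ∪
    {x : AAlg k (X ⊕ Y) | ∃ (m : ℕ) (b : X ⊕ Y), x = AAlg.gen k (AGen.r m b)})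

noncomputable def VS : Submodule k (QM k X Y N) :=
  Submodule.span k {q | ∃ w ∈ Mdr k X Y, ∃ z : X ⊕ Y,
    q = Submodule.Quotient.mk (w • Finsupp.single z (1 : AAlg k (X ⊕ Y)))}

lemma mk1_smul (w : AAlg k (X ⊕ Y)) (z : X ⊕ Y) :
    (Submodule.Quotient.mk (w • Finsupp.single z (1 : AAlg k (X ⊕ Y))) : QM k X Y N) =
      w • mk1 k X Y N z :=
  Submodule.Quotient.mk_smul _ _ _

lemma memVS (w : AAlg k (X ⊕ Y)) (hw : w ∈ Mdr k X Y) (z : X ⊕ Y) :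
    w • mk1 k X Y N z ∈ VS k X Y N := by
  rw [← mk1_smul]
  exact Submodule.subset_span ⟨w, hw, z, rfl⟩

lemma hMdrV (x : AAlg k (X ⊕ Y)) (hx : x ∈ Mdr k X Y) :
    ∀ q ∈ VS k X Y N, x • q ∈ VS k X Y N := by
  induction hx using Submonoid.closure_induction with
  | mem x hx =>
    intro q hq
    induction hq using Submodule.span_induction with
    | mem p hp =>
      obtain ⟨w, hw, z, rfl⟩ := hp
      rw [mk1_smul, ← mul_smul]
      exact memVS k X Y N _ (mul_mem (Submonoid.subset_closure hx) hw) z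
    | zero => rw [smul_zero]; exact zero_mem _
    | add p r hp hr ihp ihr => rw [smul_add]; exact add_mem ihp ihr
    | smul c p hp ihp => rw [scomm]; exact Submodule.smul_mem _ _ ihp
  | one => intro q hq; rw [one_smul]; exact hq
  | mul x y hx hy ihx ihy => intro q hq; rw [mul_smul]; exact ihx _ (ihy _ hq)

lemma hRV (a b : X ⊕ Y) : Submodule.span k (RSet k X Y N a b) ≤ VS k X Y N := by
  rw [Submodule.span_le]
  rintro q ⟨s, m', rfl⟩
  have hd : (AAlg.gen k AGen.d : AAlg k (X ⊕ Y)) ∈ Mdr k X Y :=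
    Submonoid.subset_closure (Set.mem_union_left _ rfl)
  have hr : AAlg.gen k (AGen.r m' b) ∈ Mdr k X Y :=
    Submonoid.subset_closure (Set.mem_union_right _ ⟨m', b, rfl⟩)
  exact memVS k X Y N _ (mul_mem (pow_mem hd s) hr) a

lemma hLV (w : AAlg k (X ⊕ Y)) (hw : w ∈ Mdr k X Y) :
    ∀ (m : ℕ) (a z : X ⊕ Y), AAlg.gen k (AGen.l m a) • (w • mk1 k X Y N z) ∈ VS k X Y N := by
  induction hw using Submonoid.closure_induction_left with
  | one =>
    intro m a z
    rw [one_smul]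
    exact hRV k X Y N a z (lemA k X Y N m a z)
  | mul_left x hx y hy ih =>
    intro m a z
    rw [mul_smul, ← mul_smul]
    rcases hx with h | ⟨m', b', rfl⟩
    · rw [show x = AAlg.gen k AGen.d from h, gen_ld, add_smul, mul_smul]
      refine add_mem (hMdrV k X Y N _ (Submonoid.subset_closure (Or.inl rfl)) _ (ih m a z)) ?_
      rw [smul_assoc]
      exact nsmul_mem (ih (m - 1) a z) m
    · rw [← gen_rl, mul_smul]
      exact hMdrV k X Y N _ (Submonoid.subset_closure (Or.inr ⟨m', b', rfl⟩)) _ (ih m a z)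

lemma hlV (m : ℕ) (a : X ⊕ Y) (q : QM k X Y N) (hq : q ∈ VS k X Y N) :
    AAlg.gen k (AGen.l m a) • q ∈ VS k X Y N := by
  induction hq using Submodule.span_induction with
  | mem p hp =>
    obtain ⟨w, hw, z, rfl⟩ := hp
    rw [mk1_smul]
    exact hLV k X Y N w hw m a z
  | zero => rw [smul_zero]; exact zero_mem _
  | add p r hp hr ihp ihr => rw [smul_add]; exact add_mem ihp ihr
  | smul c p hp ihp => rw [scomm]; exact Submodule.smul_mem _ _ ihp

lemma hZ (hN : ∀ (y : Y) (z : X ⊕ Y), N (Sum.inr y) z = 0)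
    (q : QM k X Y N) (hq : q ∈ VS k X Y N) :
    ∀ (n : ℕ) (y : Y), AAlg.gen k (AGen.l n (Sum.inr y : X ⊕ Y)) • q = 0 := by
  induction hq using Submodule.span_induction with
  | mem p hp =>
    obtain ⟨w, hw, z, rfl⟩ := hp
    rw [mk1_smul]
    induction hw using Submonoid.closure_induction_left with
    | one =>
      intro n y
      rw [one_smul]
      exact M1 k X Y N n (Sum.inr y) z (by simp [hN])
    | mul_left x hx w' hw' ih =>
      intro n y
      rw [mul_smul, ← mul_smul]
      rcases hx with h | ⟨m', b', rfl⟩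
      · rw [show x = AAlg.gen k AGen.d from h, gen_ld, add_smul, mul_smul, ih, smul_zero,
          smul_assoc, ih, smul_zero, add_zero]
      · rw [← gen_rl, mul_smul, ih, smul_zero]
  | zero => intro n y; rw [smul_zero]
  | add p r hp hr ihp ihr => intro n y; rw [smul_add, ihp, ihr, add_zero]
  | smul c p hp ihp => intro n y; rw [scomm, ihp, smul_zero]

/-- The monoid generated by `d` and all the `l(m,a)`. -/
noncomputable def Mdl : Submonoid (AAlg k (X ⊕ Y)) :=
  Submonoid.closure ({AAlg.gen k AGen.d} ∪
    {x : AAlg k (X ⊕ Y) | ∃ (m : ℕ) (a : X ⊕ Y), x = AAlg.gen k (AGen.l m a)})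

noncomputable def US : Submodule k (QM k X Y N) :=
  Submodule.span k {q | ∃ w ∈ Mdl k X Y, ∃ z : X ⊕ Y,
    q = Submodule.Quotient.mk (w • Finsupp.single z (1 : AAlg k (X ⊕ Y)))}

lemma memUS (w : AAlg k (X ⊕ Y)) (hw : w ∈ Mdl k X Y) (z : X ⊕ Y) :
    w • mk1 k X Y N z ∈ US k X Y N := by
  rw [← mk1_smul]
  exact Submodule.subset_span ⟨w, hw, z, rfl⟩

lemma hMdlU (x : AAlg k (X ⊕ Y)) (hx : x ∈ Mdl k X Y) :
    ∀ q ∈ US k X Y N, x • q ∈ US k X Y N := by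
  induction hx using Submonoid.closure_induction with
  | mem x hx =>
    intro q hq
    induction hq using Submodule.span_induction with
    | mem p hp =>
      obtain ⟨w, hw, z, rfl⟩ := hp
      rw [mk1_smul, ← mul_smul]
      exact memUS k X Y N _ (mul_mem (Submonoid.subset_closure hx) hw) z
    | zero => rw [smul_zero]; exact zero_mem _
    | add p r hp hr ihp ihr => rw [smul_add]; exact add_mem ihp ihr
    | smul c p hp ihp => rw [scomm]; exact Submodule.smul_mem _ _ ihp
  | one => intro q hq; rw [one_smul]; exact hq
  | mul x y hx hy ihx ihy => intro q hq; rw [mul_smul]; exact ihx _ (ihy _ hq)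

lemma hRL (w : AAlg k (X ⊕ Y)) (hw : w ∈ Mdl k X Y) :
    ∀ (m : ℕ) (b z : X ⊕ Y), AAlg.gen k (AGen.r m b) • (w • mk1 k X Y N z) ∈ US k X Y N := by
  induction hw using Submonoid.closure_induction_left with
  | one =>
    intro m b z
    rw [one_smul, M2 k X Y N m z b]
    refine sum_mem fun s hs => Submodule.smul_mem _ _ ?_
    have hd : (AAlg.gen k AGen.d : AAlg k (X ⊕ Y)) ∈ Mdl k X Y :=
      Submonoid.subset_closure (Set.mem_union_left _ rfl)
    have hl : AAlg.gen k (AGen.l (m + s) z) ∈ Mdl k X Y :=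
      Submonoid.subset_closure (Set.mem_union_right _ ⟨m + s, z, rfl⟩)
    exact memUS k X Y N _ (mul_mem (pow_mem hd s) hl) b
  | mul_left x hx y hy ih =>
    intro m b z
    rw [mul_smul, ← mul_smul]
    rcases hx with h | ⟨m', a', rfl⟩
    · rw [show x = AAlg.gen k AGen.d from h, gen_rd, add_smul, mul_smul]
      refine add_mem (hMdlU k X Y N _ (Submonoid.subset_closure (Set.mem_union_left _ rfl)) _
        (ih m b z)) ?_
      rw [smul_assoc]
      exact nsmul_mem (ih (m - 1) b z) m
    · rw [gen_rl, mul_smul]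
      exact hMdlU k X Y N _ (Submonoid.subset_closure (Set.mem_union_right _ ⟨m', a', rfl⟩)) _
        (ih m b z)

lemma hrU (m : ℕ) (b : X ⊕ Y) (q : QM k X Y N) (hq : q ∈ US k X Y N) :
    AAlg.gen k (AGen.r m b) • q ∈ US k X Y N := by
  induction hq using Submodule.span_induction with
  | mem p hp =>
    obtain ⟨w, hw, z, rfl⟩ := hp
    rw [mk1_smul]
    exact hRL k X Y N w hw m b z
  | zero => rw [smul_zero]; exact zero_mem _
  | add p r hp hr ihp ihr => rw [smul_add]; exact add_mem ihp ihr
  | smul c p hp ihp => rw [scomm]; exact Submodule.smul_mem _ _ ihp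

lemma hAU (x : AAlg k (X ⊕ Y)) : ∀ q ∈ US k X Y N, x • q ∈ US k X Y N := by
  obtain ⟨f, rfl⟩ := RingQuot.mkAlgHom_surjective k (ARel k (X ⊕ Y)) x
  induction f using FreeAlgebra.induction with
  | grade0 c =>
    intro q hq
    rw [AlgHom.commutes, algebraMap_smul]
    exact Submodule.smul_mem _ _ hq
  | grade1 g =>
    intro q hq
    show AAlg.gen k g • q ∈ US k X Y N
    cases g with
    | d => exact hMdlU k X Y N _ (Submonoid.subset_closure (Set.mem_union_left _ rfl)) q hq
    | l n a =>
      exact hMdlU k X Y N _ (Submonoid.subset_closure (Set.mem_union_right _ ⟨n, a, rfl⟩)) q hq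
    | r n a => exact hrU k X Y N n a q hq
  | mul a b iha ihb =>
    intro q hq
    rw [map_mul, mul_smul]
    exact iha _ (ihb _ hq)
  | add a b iha ihb =>
    intro q hq
    rw [map_add, add_smul]
    exact add_mem (iha _ hq) (ihb _ hq)

lemma hUtop (q : QM k X Y N) : q ∈ US k X Y N := by
  obtain ⟨f, rfl⟩ := Submodule.Quotient.mk_surjective _ q
  induction f using Finsupp.induction with
  | zero =>
    rw [Submodule.Quotient.mk_zero]
    exact zero_mem _
  | single_add z x f hzf hx ih =>
    rw [Submodule.Quotient.mk_add]
    refine add_mem ?_ ih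
    have hx1 : Finsupp.single z x = x • Finsupp.single z (1 : AAlg k (X ⊕ Y)) := by
      rw [Finsupp.smul_single, smul_eq_mul, mul_one]
    rw [hx1, mk1_smul]
    refine hAU k X Y N x _ ?_
    have h1 := memUS k X Y N 1 (one_mem _) z
    rwa [one_smul] at h1

/-- The target set of the theorem. -/
noncomputable def ESet : Set (QM k X Y N) :=
  {q | ∃ u ∈ Submonoid.closure
      ({AAlg.gen k AGen.d} ∪
        {x : AAlg k (X ⊕ Y) | ∃ (n : ℕ) (a : X),
          x = AAlg.gen k (AGen.l n (Sum.inl a)) ∨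
          x = AAlg.gen k (AGen.r n (Sum.inl a))}),
    ∃ z : X ⊕ Y,
      q = Submodule.Quotient.mk (u • Finsupp.single z (1 : AAlg k (X ⊕ Y)))}

lemma memES (u : AAlg k (X ⊕ Y))
    (hu : u ∈ Submonoid.closure
      ({AAlg.gen k AGen.d} ∪
        {x : AAlg k (X ⊕ Y) | ∃ (n : ℕ) (a : X),
          x = AAlg.gen k (AGen.l n (Sum.inl a)) ∨
          x = AAlg.gen k (AGen.r n (Sum.inl a))})) (z : X ⊕ Y) :
    u • mk1 k X Y N z ∈ Submodule.span k (ESet k X Y N) := by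
  rw [← mk1_smul]
  exact Submodule.subset_span ⟨u, hu, z, rfl⟩

lemma hMXE (x : AAlg k (X ⊕ Y))
    (hx : x ∈ ({AAlg.gen k AGen.d} ∪
        {x : AAlg k (X ⊕ Y) | ∃ (n : ℕ) (a : X),
          x = AAlg.gen k (AGen.l n (Sum.inl a)) ∨
          x = AAlg.gen k (AGen.r n (Sum.inl a))}))
    (q : QM k X Y N) (hq : q ∈ Submodule.span k (ESet k X Y N)) :
    x • q ∈ Submodule.span k (ESet k X Y N) := by
  induction hq using Submodule.span_induction with
  | mem p hp =>
    obtain ⟨u, hu, z, rfl⟩ := hp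
    rw [mk1_smul, ← mul_smul]
    exact memES k X Y N _ (mul_mem (Submonoid.subset_closure hx) hu) z
  | zero => rw [smul_zero]; exact zero_mem _
  | add p r hp hr ihp ihr => rw [smul_add]; exact add_mem ihp ihr
  | smul c p hp ihp => rw [scomm]; exact Submodule.smul_mem _ _ ihp

lemma hWE (hN : ∀ (y : Y) (z : X ⊕ Y), N (Sum.inr y) z = 0)
    (w : AAlg k (X ⊕ Y)) (hw : w ∈ Mdl k X Y) :
    ∀ z : X ⊕ Y, w • mk1 k X Y N z ∈ Submodule.span k (ESet k X Y N) ∧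
      w • mk1 k X Y N z ∈ VS k X Y N := by
  induction hw using Submonoid.closure_induction_left with
  | one =>
    intro z
    rw [one_smul]
    constructor
    · have h1 := memES k X Y N 1 (one_mem _) z
      rwa [one_smul] at h1
    · have h1 := memVS k X Y N 1 (one_mem _) z
      rwa [one_smul] at h1
  | mul_left x hx v hv ih =>
    intro z
    obtain ⟨ihE, ihV⟩ := ih z
    rw [mul_smul]
    rcases hx with h | ⟨m, a, rfl⟩
    · rw [show x = AAlg.gen k AGen.d from h]
      exact ⟨hMXE k X Y N _ (Set.mem_union_left _ rfl) _ ihE,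
        hMdrV k X Y N _ (Submonoid.subset_closure (Set.mem_union_left _ rfl)) _ ihV⟩
    · cases a with
      | inl xx =>
        exact ⟨hMXE k X Y N _ (Set.mem_union_right _ ⟨m, xx, Or.inl rfl⟩) _ ihE,
          hlV k X Y N m _ _ ihV⟩
      | inr y =>
        rw [hZ k X Y N hN _ ihV m y]
        exact ⟨zero_mem _, zero_mem _⟩

lemma hUE (hN : ∀ (y : Y) (z : X ⊕ Y), N (Sum.inr y) z = 0) :
    US k X Y N ≤ Submodule.span k (ESet k X Y N) := by
  refine Submodule.span_le.mpr ?_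
  rintro q ⟨w, hw, z, rfl⟩
  rw [mk1_smul]
  exact (hWE k X Y N hN w hw z).1

end NER

/-- Let `X`, `Y` be disjoint sets, `N` a locality function with `N(y,z) = 0` for
`y ∈ Y`, and `Q` the quotient of the free `A(X ∪ Y)`-module with basis `X ∪ Y` by the
submodule generated by `modRels`.  Then every element of `Q` is a `k`-linear combination of
images of elements `u·z`, where `z ∈ X ∪ Y` and `u` is a (possibly empty) product of the
generators `d`, `l(n,x)`, `r(n,x)` with `x ∈ X` only; that is, `Q` is spanned by the image of
`A(X) ⊗ (kX ⊕ kY)`. -/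
theorem null_extension_reduction (k : Type*) [Field k] [CharZero k] (X Y : Type*)
    (N : (X ⊕ Y) → (X ⊕ Y) → ℕ) (hN : ∀ (y : Y) (z : X ⊕ Y), N (Sum.inr y) z = 0) :
    Submodule.span k
      {q : ((X ⊕ Y) →₀ AAlg k (X ⊕ Y)) ⧸ Submodule.span (AAlg k (X ⊕ Y)) (modRels k X Y N) |
        ∃ u ∈ Submonoid.closure
            ({AAlg.gen k AGen.d} ∪
              {x : AAlg k (X ⊕ Y) | ∃ (n : ℕ) (a : X),
                x = AAlg.gen k (AGen.l n (Sum.inl a)) ∨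
                x = AAlg.gen k (AGen.r n (Sum.inl a))}),
          ∃ z : X ⊕ Y,
            q = Submodule.Quotient.mk (u • Finsupp.single z (1 : AAlg k (X ⊕ Y)))} = ⊤ := by
  show Submodule.span k (NER.ESet k X Y N) = ⊤
  rw [eq_top_iff]
  intro q _
  exact NER.hUE k X Y N hN (NER.hUtop k X Y N q)
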